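/- arXiv:2605.13003 — 3 statements merged into one kernel-verified Lean document; each statement's English description precedes it below -/
import Mathlib

section
/- Let R0 and F0 be dual Dyck sequences and let rowsert(R0,F0) = (E,R). Then both the final row R and the evicted sequence E are dual Dyck sequences. -/
/-- A finite integer sequence is a *dual Dyck sequence* if each entry is at
least the previous entry plus 2. The empty sequence is allowed. -/
def DualDyck (x : List ℤ) : Prop := List.Chain' (fun a b => a + 2 ≤ b) x

/-- Length of the maximal `+2`-chain starting at the first position. -/
def chainUp : List ℤ → ℕ
  | [] => 0
  | [_] => 1
  | a :: b :: t => if b = a + 2 then chainUp (b :: t) + 1 else 1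

/-- One step of row insertion.  The state is the current row `R` and the
current input with head `a` and tail `F`.  The result is
`(newly evicted block, new row, new remaining input)`. -/
def rowsertStep (R : List ℤ) (a : ℤ) (F : List ℤ) :
    List ℤ × List ℤ × List ℤ :=
  match R.findIdx? (fun r => decide (a ≤ r + 1)) with
  | none => ([], R ++ [a], F)                                   -- Case 0
  | some i =>
    let ri := R.getD i 0
    if a ≤ ri then ([ri], R.set i a, F)                         -- Case 1
    else
      let j := chainUp (R.drop i)
      let k := chainUp (a :: F)
      if j ≤ k then                                             -- Case 2
        ((R.drop i).take j,
         R.take i ++ (a :: F).take j ++ R.drop (i + j),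
         (a :: F).drop j)
      else                                                      -- Case 3
        ((a :: F).take k, R, (a :: F).drop k)

/-- Fuel-indexed run of row insertion on state `(E, R, F)`.  Each step
consumes at least one input element, so fuel `F.length` always suffices. -/
def rowsertAux : ℕ → List ℤ → List ℤ → List ℤ → List ℤ × List ℤ
  | 0, E, R, _ => (E, R)
  | _ + 1, E, R, [] => (E, R)
  | fuel + 1, E, R, a :: F =>
      let s := rowsertStep R a F
      rowsertAux fuel (E ++ s.1) s.2.1 s.2.2

/-- Row insertion `rowsert(R₀, F₀) = (E, R)`. -/
def rowsert (R0 F0 : List ℤ) : List ℤ × List ℤ :=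
  rowsertAux F0.length [] R0 F0


open List
set_option maxHeartbeats 1000000

instance : IsTrans ℤ (fun a b => a + 2 ≤ b) := ⟨fun _ _ _ h1 h2 => by omega⟩

lemma dd_sub {l₁ l₂ : List ℤ} (h : DualDyck l₂) (hs : l₁ <+ l₂) : DualDyck l₁ :=
  @IsChain.sublist _ _ _ _ ⟨fun h1 h2 => by omega⟩ h hs

lemma dd_get {l : List ℤ} (h : DualDyck l) {i : ℕ} (hi : i + 1 < l.length) :
    l[i]'(by omega) + 2 ≤ l[i+1] := by
  have := (isChain_iff_getElem.mp h) i (by omega)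
  simpa using this

lemma dd_of_get {l : List ℤ} (h : ∀ i (hi : i + 1 < l.length), l[i]'(by omega) + 2 ≤ l[i+1]) :
    DualDyck l := by
  exact isChain_iff_getElem.mpr (fun i hi => by simpa using h i (by omega))

lemma dd_mono {l : List ℤ} (h : DualDyck l) {m n : ℕ} (hmn : m < n) (hn : n < l.length) :
    l[m]'(by omega) + 2 ≤ l[n] := by
  induction n with
  | zero => omega
  | succ k ih =>
    have hk := dd_get h (i := k) hn
    rcases Nat.lt_or_ge m k with h'|h'
    · have := ih h' (by omega); omega
    · have : m = k := by omega
      subst this; exact hk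

lemma chainUp_pos {l : List ℤ} (h : l ≠ []) : 0 < chainUp l := by
  match l with
  | [x] => simp [chainUp]
  | a :: b :: t => by_cases hb : b = a + 2 <;> simp [chainUp, hb]

lemma chainUp_le_length : ∀ (l : List ℤ), chainUp l ≤ l.length
  | [] => by simp [chainUp]
  | [x] => by simp [chainUp]
  | a :: b :: t => by
    have := chainUp_le_length (b :: t)
    simp only [chainUp, length_cons] at *
    split <;> omega

lemma chainUp_getElem' : ∀ {l : List ℤ} {t : ℕ} {x y : ℤ}, t < chainUp l →
    l[t]? = some x → l[0]? = some y → x = y + 2 * t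
  | [], t, x, y, ht, hx, hy => by simp [chainUp] at ht
  | [a], t, x, y, ht, hx, hy => by
    have : t = 0 := by simp [chainUp] at ht; omega
    subst this
    simp at hx hy; omega
  | a :: b :: l', t, x, y, ht, hx, hy => by
    simp only [getElem?_cons_zero, Option.some.injEq] at hy
    subst hy
    match t with
    | 0 => simp at hx; omega
    | s + 1 =>
      by_cases hb : b = a + 2
      · simp only [chainUp, if_pos hb] at ht
        have hx' : (b :: l')[s]? = some x := by simpa using hx
        have := chainUp_getElem' (l := b :: l') (t := s) (x := x) (y := b) (by omega) hx' (by simp)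
        rw [this, hb]; push_cast; ring
      · simp only [chainUp, if_neg hb] at ht; omega

lemma chainUp_stop_ne' : ∀ {l : List ℤ} {x y : ℤ}, chainUp l < l.length →
    l[chainUp l]? = some x → l[chainUp l - 1]? = some y → x ≠ y + 2
  | [], x, y, h, hx, hy => by simp at h
  | [a], x, y, h, hx, hy => by simp [chainUp] at h
  | a :: b :: l', x, y, h, hx, hy => by
    by_cases hb : b = a + 2
    · have hc : chainUp (a :: b :: l') = chainUp (b :: l') + 1 := by
        simp [chainUp, hb]
      rw [hc] at h hx hy
      have hpos : 0 < chainUp (b :: l') := chainUp_pos (by simp)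
      have hx' : (b :: l')[chainUp (b :: l')]? = some x := by simpa using hx
      have hy' : (b :: l')[chainUp (b :: l') - 1]? = some y := by
        rw [show chainUp (b :: l') + 1 - 1 = (chainUp (b :: l') - 1) + 1 by omega] at hy
        simpa using hy
      exact chainUp_stop_ne' (by simp at h ⊢; omega) hx' hy'
    · have hc : chainUp (a :: b :: l') = 1 := by simp [chainUp, hb]
      rw [hc] at hx hy
      simp at hx hy
      omega

lemma chainUp_getElem {l : List ℤ} {t : ℕ} (ht : t < chainUp l) (h : t < l.length)
    (h0 : 0 < l.length) : l[t] = l[0] + 2 * t :=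
  chainUp_getElem' ht (getElem?_eq_getElem h) (getElem?_eq_getElem h0)

lemma chainUp_stop {l : List ℤ} (h : DualDyck l) (hlt : chainUp l < l.length) :
    l[0]'(by omega) + 2 * chainUp l + 1 ≤ l[chainUp l] := by
  have h0 : 0 < l.length := by omega
  have hpos := chainUp_pos (l := l) (by rintro rfl; simp at h0)
  have hne := chainUp_stop_ne' hlt (getElem?_eq_getElem hlt)
      (getElem?_eq_getElem (show chainUp l - 1 < l.length by omega))
  have hprev : l[chainUp l - 1]'(by omega) = l[0] + 2 * (chainUp l - 1 : ℕ) :=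
    chainUp_getElem (by omega) (by omega) h0
  have hmono : l[chainUp l - 1]'(by omega) + 2 ≤ l[chainUp l] := dd_mono h (by omega) hlt
  have hcast : ((chainUp l - 1 : ℕ) : ℤ) = (chainUp l : ℤ) - 1 := by
    have : 1 ≤ chainUp l := hpos
    push_cast [Nat.cast_sub this]; ring
  rw [hprev, hcast] at hne hmono
  omega

lemma getLast?_take_eq {l : List ℤ} {c : ℕ} (h0 : 0 < c) (hc : c ≤ l.length) :
    (l.take c).getLast? = some (l[c-1]'(by omega)) := by
  rw [getLast?_eq_getElem?, length_take, Nat.min_eq_left hc, getElem?_take,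
    if_pos (by omega), getElem?_eq_getElem (by omega)]

lemma head?_drop_eq {l : List ℤ} {m : ℕ} (h : m < l.length) :
    (l.drop m).head? = some (l[m]) := by
  rw [head?_drop, getElem?_eq_getElem h]

lemma head?_take_eq {l : List ℤ} {c : ℕ} (h0 : 0 < c) (hl : 0 < l.length) :
    (l.take c).head? = some (l[0]) := by
  cases l with
  | nil => simp at hl
  | cons x t => cases c with
    | zero => omega
    | succ c => simp

lemma findIdx?_facts {R : List ℤ} {a : ℤ} {i : ℕ}
    (h : R.findIdx? (fun r => decide (a ≤ r + 1)) = some i) :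
    ∃ (hi : i < R.length), a ≤ R[i] + 1 ∧ ∀ m (hm : m < i), R[m]'(by omega) ≤ a - 2 := by
  rw [findIdx?_eq_some_iff_findIdx_eq] at h
  obtain ⟨hi, hfi⟩ := h
  refine ⟨hi, ?_, ?_⟩
  · have := findIdx_getElem (p := fun r => decide (a ≤ r + 1)) (xs := R) (w := by omega)
    simp only [decide_eq_true_eq] at this
    rw [show R[List.findIdx (fun r => decide (a ≤ r + 1)) R]'(by omega) = R[i]'hi by
      congr 1] at this
    exact this
  · intro m hm
    have := not_of_lt_findIdx (p := fun r => decide (a ≤ r + 1)) (xs := R) (i := m)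
      (by omega)
    simp only [decide_eq_false_iff_not] at this
    omega

/-- The inductive invariant on the last evicted element. -/
def Inv2 (E R F : List ℤ) : Prop :=
  ∀ e, E.getLast? = some e → ∀ a' F'', F = a' :: F'' →
    ∀ i, R.findIdx? (fun r => decide (a' ≤ r + 1)) = some i →
      ∀ (hi : i < R.length), e + 2 ≤ R[i]

lemma rowsertStep_none {R : List ℤ} {a : ℤ} {F : List ℤ}
    (h : R.findIdx? (fun r => decide (a ≤ r + 1)) = none) :
    rowsertStep R a F = ([], R ++ [a], F) := by
  unfold rowsertStep; rw [h]

lemma rowsertStep_case1 {R : List ℤ} {a : ℤ} {F : List ℤ} {i : ℕ}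
    (h : R.findIdx? (fun r => decide (a ≤ r + 1)) = some i) (h1 : a ≤ R.getD i 0) :
    rowsertStep R a F = ([R.getD i 0], R.set i a, F) := by
  have h1' : a ≤ R[i]?.getD 0 := by rwa [List.getD_eq_getElem?_getD] at h1
  unfold rowsertStep; rw [h]; simp [h1', List.getD_eq_getElem?_getD]

lemma rowsertStep_case2 {R : List ℤ} {a : ℤ} {F : List ℤ} {i : ℕ}
    (h : R.findIdx? (fun r => decide (a ≤ r + 1)) = some i) (h1 : ¬ a ≤ R.getD i 0)
    (h2 : chainUp (R.drop i) ≤ chainUp (a :: F)) :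
    rowsertStep R a F = ((R.drop i).take (chainUp (R.drop i)),
      R.take i ++ (a :: F).take (chainUp (R.drop i)) ++ R.drop (i + chainUp (R.drop i)),
      (a :: F).drop (chainUp (R.drop i))) := by
  have h1' : ¬ a ≤ R[i]?.getD 0 := by rwa [List.getD_eq_getElem?_getD] at h1
  unfold rowsertStep; rw [h]; simp [h1', h2]

lemma rowsertStep_case3 {R : List ℤ} {a : ℤ} {F : List ℤ} {i : ℕ}
    (h : R.findIdx? (fun r => decide (a ≤ r + 1)) = some i) (h1 : ¬ a ≤ R.getD i 0)
    (h2 : ¬ chainUp (R.drop i) ≤ chainUp (a :: F)) :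
    rowsertStep R a F = ((a :: F).take (chainUp (a :: F)), R,
      (a :: F).drop (chainUp (a :: F))) := by
  have h1' : ¬ a ≤ R[i]?.getD 0 := by rwa [List.getD_eq_getElem?_getD] at h1
  unfold rowsertStep; rw [h]; simp [h1', h2]

lemma step_good {E R F : List ℤ} {a : ℤ}
    (hE : DualDyck E) (hR : DualDyck R) (hF : DualDyck (a :: F)) (hinv : Inv2 E R (a :: F)) :
    DualDyck (E ++ (rowsertStep R a F).1) ∧ DualDyck (rowsertStep R a F).2.1 ∧
    DualDyck (rowsertStep R a F).2.2 ∧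
    Inv2 (E ++ (rowsertStep R a F).1) (rowsertStep R a F).2.1 (rowsertStep R a F).2.2 := by
  have hFtail : DualDyck F := hF.tail
  cases hfind : R.findIdx? (fun r => decide (a ≤ r + 1)) with
  | none =>
    rw [rowsertStep_none hfind]
    rw [findIdx?_eq_none_iff] at hfind
    have hall : ∀ x ∈ R, x ≤ a - 2 := by
      intro x hx; have := hfind x hx; simp at this; omega
    refine ⟨by simpa using hE, ?_, hFtail, ?_⟩
    · rw [DualDyck, List.Chain', isChain_append]
      refine ⟨hR, isChain_singleton _, ?_⟩
      intro x hx y hy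
      simp only [head?_cons, Option.mem_def, Option.some.injEq] at hy
      subst hy
      rw [Option.mem_def, getLast?_eq_some_iff] at hx
      obtain ⟨ys, rfl⟩ := hx
      have := hall x (by simp)
      omega
    · intro e he a' F'' hFeq i' hfi' hi'
      subst hFeq
      have ha' : a + 2 ≤ a' := by
        have := dd_get hF (i := 0) (by simp)
        simpa using this
      exfalso
      obtain ⟨hi'', hp', _⟩ := findIdx?_facts hfi'
      rw [getElem_append] at hp'
      split at hp'
      · have := hall (R[i']'(by assumption)) (by exact getElem_mem _)
        omega
      · simp at hp'
        omega
  | some i =>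
    obtain ⟨hi, hpi, hlo⟩ := findIdx?_facts hfind
    have hgd : R.getD i 0 = R[i] := getD_eq_getElem R 0 hi
    by_cases hcase1 : a ≤ R[i]
    · rw [rowsertStep_case1 hfind (by omega), hgd]
      refine ⟨?_, ?_, hFtail, ?_⟩
      · rw [DualDyck, List.Chain', isChain_append]
        refine ⟨hE, isChain_singleton _, ?_⟩
        intro x hx y hy
        simp only [head?_cons, Option.mem_def, Option.some.injEq] at hy
        subst hy
        exact hinv x hx a F rfl i hfind hi
      · apply dd_of_get
        intro n hn
        simp only [length_set] at hn
        rw [getElem_set, getElem_set]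
        by_cases h1 : i = n
        · rw [if_pos h1, if_neg (by omega)]
          have := dd_get hR hn
          have : R[n]'(by omega) = R[i] := by congr 1; omega
          have hd := dd_get hR hn
          omega
        · by_cases h2 : i = n + 1
          · rw [if_neg h1, if_pos h2]
            have := hlo n (by omega)
            omega
          · rw [if_neg h1, if_neg h2]
            exact dd_get hR hn
      · intro e he a' F'' hFeq i₂ hf₂ hi₂
        subst hFeq
        have he' : e = R[i] := by
          rw [getLast?_concat] at he
          exact (Option.some.injEq _ _).mp he |>.symm
        have ha' : a + 2 ≤ a' := by
          have := dd_get hF (i := 0) (by simp)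
          simpa using this
        obtain ⟨hi₂', hp₂, hlo₂⟩ := findIdx?_facts hf₂
        simp only [length_set] at hi₂'
        have hii : i < i₂ := by
          by_contra hc
          push_neg at hc
          rcases Nat.lt_or_ge i₂ i with h'|h'
          · have := hlo i₂ h'
            rw [getElem_set, if_neg (by omega)] at hp₂
            omega
          · have : i₂ = i := by omega
            subst this
            rw [getElem_set, if_pos rfl] at hp₂
            omega
        rw [getElem_set, if_neg (by omega)] at hp₂ ⊢
        have := dd_mono hR hii hi₂'
        omega
    · have hri : R[i] = a - 1 := by omega
      have hdne : R.drop i ≠ [] := by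
        rw [← length_pos_iff]; simp; omega
      have hjpos : 0 < chainUp (R.drop i) := chainUp_pos hdne
      have hjle : chainUp (R.drop i) ≤ R.length - i := by
        have := chainUp_le_length (R.drop i); simpa using this
      have hkpos : 0 < chainUp (a :: F) := chainUp_pos (by simp)
      have hkle : chainUp (a :: F) ≤ F.length + 1 := by
        have := chainUp_le_length (a :: F); simpa using this
      have hdd : DualDyck (R.drop i) := dd_sub hR (drop_sublist _ _)
      set j := chainUp (R.drop i) with hj
      set k := chainUp (a :: F) with hk
      have hd0 : (R.drop i)[0]'(by simp; omega) = a - 1 := by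
        rw [getElem_drop]; simpa using hri
      have hchainR : ∀ t, t < j → ∀ (h : i + t < R.length), R[i+t] = a - 1 + 2*t := by
        intro t ht h
        have h2 := chainUp_getElem (l := R.drop i) (t := t) ht (by simp; omega) (by simp; omega)
        rw [getElem_drop, hd0] at h2
        exact h2
      have hstopR : ∀ (h : i + j < R.length), a - 1 + 2*j + 1 ≤ R[i+j] := by
        intro h
        have h2 := chainUp_stop hdd (by simp; omega)
        simp only [getElem_drop, Nat.add_zero] at h2
        rw [hri] at h2
        exact h2
      have hchainF : ∀ t, t < k → ∀ (h : t < F.length + 1), (a::F)[t]'(by simpa using h) = a + 2*t := by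
        intro t ht h
        have h2 := chainUp_getElem (l := a :: F) (t := t) ht (by simpa using h) (by simp)
        simpa using h2
      have hstopF : ∀ (h : k < F.length + 1), a + 2*k + 1 ≤ (a::F)[k]'(by simpa using h) := by
        intro h
        have h2 := chainUp_stop hF (by simpa using h)
        simpa using h2
      by_cases hjk : j ≤ k
      · rw [rowsertStep_case2 hfind (by omega) hjk]
        simp only [← hj, ← hk]
        have hjlenF : j ≤ F.length + 1 := by omega
        have hlenT1 : (R.take i).length = i := by simp; omega
        have hlenC : ((a :: F).take j).length = j := by simp; omega
        have hlenR' : (R.take i ++ (a :: F).take j ++ R.drop (i+j)).length = R.length := by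
          simp; omega
        have hvj : ∀ t (ht : t < j), (a::F)[t]'(by simp; omega) = a + 2*t :=
          fun t ht => hchainF t (by omega) (by omega)
        have hval : ∀ n (hn : n < R.length),
            (R.take i ++ (a :: F).take j ++ R.drop (i+j))[n]'(by omega) =
              if n < i then R[n]'(by omega)
              else if h2 : n < i + j then (a::F)[n - i]'(by simp; omega)
              else R[n] := by
          intro n hn
          by_cases h1 : n < i
          · rw [if_pos h1]
            rw [getElem_append, dif_pos (by simp only [length_append, hlenT1, hlenC]; omega),
              getElem_append, dif_pos (by rw [hlenT1]; exact h1), getElem_take]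
          · rw [if_neg h1]
            by_cases h2 : n < i + j
            · rw [dif_pos h2]
              rw [getElem_append, dif_pos (by simp only [length_append, hlenT1, hlenC]; omega),
                getElem_append, dif_neg (by rw [hlenT1]; omega), getElem_take]
              congr 1
              rw [hlenT1]
            · rw [dif_neg h2]
              rw [getElem_append, dif_neg (by simp only [length_append, hlenT1, hlenC]; omega),
                getElem_drop]
              congr 1
              simp only [length_append, hlenT1, hlenC]
              omega
        have ddB : DualDyck ((R.drop i).take j) :=
          dd_sub hR ((take_sublist _ _).trans (drop_sublist _ _))
        refine ⟨?_, ?_, dd_sub hF (drop_sublist _ _), ?_⟩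
        · rw [DualDyck, List.Chain', isChain_append]
          refine ⟨hE, ddB, ?_⟩
          intro x hx y hy
          have hy' : y = a - 1 := by
            rw [Option.mem_def, head?_take_eq hjpos (by simp; omega), hd0] at hy
            exact ((Option.some.injEq _ _).mp hy).symm
          have := hinv x hx a F rfl i hfind hi
          omega
        · apply dd_of_get
          intro n hn
          rw [hlenR'] at hn
          rw [hval n (by omega), hval (n+1) (by omega)]
          by_cases hA : n + 1 < i
          · rw [if_pos (by omega), if_pos hA]
            exact dd_get hR (by omega)
          · by_cases hB : n < i
            · -- n + 1 = i, right side in chunk zone (j ≥ 1)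
              rw [if_pos hB, if_neg (by omega), dif_pos (by omega)]
              have hv0 := hvj (n+1-i) (by omega)
              rw [hv0]
              have := hlo n (by omega)
              have : (n+1-i : ℕ) = 0 := by omega
              rw [this]
              push_cast
              have := hlo n (by omega)
              omega
            · by_cases hC : n + 1 < i + j
              · rw [if_neg hB, dif_pos (by omega), if_neg (by omega), dif_pos hC]
                rw [hvj (n - i) (by omega), hvj (n + 1 - i) (by omega)]
                omega
              · by_cases hD : n < i + j
                · -- n + 1 = i + j boundary
                  rw [if_neg hB, dif_pos hD, if_neg (by omega), dif_neg (by omega)]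
                  rw [hvj (n - i) (by omega)]
                  have hst := hstopR (show i + j < R.length by omega)
                  have heq : R[n+1]'(by omega) = R[i+j]'(by omega) := by congr 1; omega
                  rw [heq]
                  omega
                · rw [if_neg hB, dif_neg hD, if_neg (by omega), dif_neg (by omega)]
                  exact dd_get hR (by omega)
        · intro e he a₂ F₂ hF2 i₂ hf₂ hi₂
          have hBne : (R.drop i).take j ≠ [] := by
            rw [← length_pos_iff]; simp; omega
          rw [getLast?_append_of_ne_nil _ hBne,
            getLast?_take_eq hjpos (by simp; omega)] at he
          have he' : e = R[i + (j-1)]'(by omega) := by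
            injection he with he
            rw [← he, getElem_drop]
          have hev : R[i + (j-1)]'(by omega) = a - 1 + 2*((j-1 : ℕ) : ℤ) :=
            hchainR (j-1) (by omega) (by omega)
          have hjlen : j < (a::F).length := by
            have hne : (a::F).drop j ≠ [] := by rw [hF2]; simp
            rw [← length_pos_iff] at hne; simp at hne; simpa using hne
          have ha₂ : a₂ = (a::F)[j]'hjlen := by
            have hh := head?_drop_eq (l := a::F) (m := j) hjlen
            rw [hF2] at hh
            simpa using hh
          have ha₂ge : a + 2*(j:ℤ) ≤ a₂ := by
            rcases Nat.lt_or_ge j k with h'|h'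
            · rw [ha₂, hchainF j h' (by simp only [length_cons] at hjlen; omega)]
            · have hjk2 : j = k := by omega
              have hst := hstopF (by simp only [length_cons] at hjlen; omega)
              have heq : (a::F)[j]'hjlen = (a::F)[k]'(by omega) := by
                congr 1
              rw [ha₂, heq]
              omega
          obtain ⟨hi₂', hp₂, hlo₂⟩ := findIdx?_facts hf₂
          have hi₂'' : i₂ < R.length := by rw [hlenR'] at hi₂'; exact hi₂'
          rw [hval i₂ hi₂''] at hp₂
          have hge : i + j ≤ i₂ := by
            by_contra hc
            push_neg at hc
            by_cases h1 : i₂ < i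
            · rw [if_pos h1] at hp₂
              have := hlo i₂ h1
              omega
            · rw [if_neg h1, dif_pos hc] at hp₂
              rw [hvj (i₂ - i) (by omega)] at hp₂
              omega
          rw [hval i₂ hi₂'', if_neg (by omega), dif_neg (by omega)]
          have := dd_mono hR (show i + (j-1) < i₂ by omega) hi₂''
          rw [he', hev] at *
          omega
      · rw [rowsertStep_case3 hfind (by omega) (by omega)]
        simp only [← hk]
        have ddB : DualDyck ((a::F).take k) := dd_sub hF (take_sublist _ _)
        refine ⟨?_, hR, dd_sub hF (drop_sublist _ _), ?_⟩
        · rw [DualDyck, List.Chain', isChain_append]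
          refine ⟨hE, ddB, ?_⟩
          intro x hx y hy
          have hy' : y = a := by
            rw [Option.mem_def, head?_take_eq hkpos (by simp)] at hy
            simpa using ((Option.some.injEq _ _).mp hy).symm
          have := hinv x hx a F rfl i hfind hi
          omega
        · intro e he a₂ F₂ hF2 i₂ hf₂ hi₂
          have hBne : (a::F).take k ≠ [] := by rw [← length_pos_iff]; simp only [length_take, length_cons]; omega
          rw [getLast?_append_of_ne_nil _ hBne,
            getLast?_take_eq hkpos (by simp; omega)] at he
          have he' : e = a + 2*((k-1:ℕ):ℤ) := by
            injection he with he
            rw [← he, hchainF (k-1) (by omega) (by omega)]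
          have hklen : k < (a::F).length := by
            have hne : (a::F).drop k ≠ [] := by rw [hF2]; simp
            rw [← length_pos_iff] at hne; simp at hne; simpa using hne
          have hst := hstopF (by simp only [length_cons] at hklen; omega)
          have ha₂ : a₂ = (a::F)[k]'hklen := by
            have hh := head?_drop_eq (l := a::F) (m := k) hklen
            rw [hF2] at hh
            simpa using hh
          have ha₂' : a + 2*(k:ℤ) + 1 ≤ a₂ := by
            rw [ha₂]; exact hst
          obtain ⟨hi₂', hp₂, _⟩ := findIdx?_facts hf₂
          rw [he']
          omega

lemma aux_good (fuel : ℕ) : ∀ E R F, DualDyck E → DualDyck R → DualDyck F → Inv2 E R F →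
    DualDyck (rowsertAux fuel E R F).1 ∧ DualDyck (rowsertAux fuel E R F).2 := by
  induction fuel with
  | zero => intro E R F hE hR _ _; exact ⟨hE, hR⟩
  | succ n ih =>
    intro E R F hE hR hF hinv
    cases F with
    | nil => exact ⟨hE, hR⟩
    | cons a F =>
      have hs := step_good hE hR hF hinv
      simp only [rowsertAux]
      exact ih _ _ _ hs.1 hs.2.1 hs.2.2.1 hs.2.2.2


/-- **Row insertion preserves dual Dyck sequences.**  If `R₀` and `F₀` are dual
Dyck sequences and `rowsert(R₀, F₀) = (E, R)`, then both the evicted sequence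
`E` and the final row `R` are dual Dyck sequences. -/
theorem rowsert_dualDyck (R0 F0 E R : List ℤ)
    (hR0 : DualDyck R0) (hF0 : DualDyck F0)
    (h : rowsert R0 F0 = (E, R)) :
    DualDyck E ∧ DualDyck R := by
  have hinv0 : Inv2 [] R0 F0 := by intro e he; simp at he
  have hg := aux_good F0.length [] R0 F0 isChain_nil hR0 hF0 hinv0
  rw [rowsert] at h
  rw [h] at hg
  exact hg
end

section
/- Let R0 and F0 be dual Dyck sequences with rowsert(R0,F0) = (E,R). Then di(R0 ⧺ F0) = di(E ⧺ R), where ⧺ denotes concatenation of sequences. -/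
/-- `di x` is the number of pairs `i < j` with `x i = x j + 1`. -/
def di (x : List ℤ) : ℕ :=
  ((Finset.range x.length ×ˢ Finset.range x.length).filter
    (fun p => p.1 < p.2 ∧ x.getD p.1 0 = x.getD p.2 0 + 1)).card

/-- number of pairs (x ∈ A, b ∈ B) with x = b + 1 -/
def cross (A B : List ℤ) : ℕ := (A.map (fun x => B.countP (fun b => decide (x = b + 1)))).sum

def dii : List ℤ → ℕ
  | [] => 0
  | a :: l => l.countP (fun b => decide (a = b + 1)) + dii l

lemma countP_eq_sum (l : List ℤ) (p : ℤ → Bool) :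
    ∑ j ∈ Finset.range l.length, (if p (l.getD j 0) then 1 else 0) = l.countP p := by
  induction l with
  | nil => simp
  | cons a l ih =>
    rw [List.length_cons, Finset.sum_range_succ', List.countP_cons]
    simp only [List.getD_cons_succ, List.getD_cons_zero, ih]

lemma di_eq_dii (x : List ℤ) : di x = dii x := by
  induction x with
  | nil => simp [di, dii]
  | cons a l ih =>
    have key : ∀ (y : List ℤ), di y =
        ∑ i ∈ Finset.range y.length, ∑ j ∈ Finset.range y.length,
          (if i < j ∧ y.getD i 0 = y.getD j 0 + 1 then 1 else 0) := by
      intro y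
      rw [di, Finset.card_filter, Finset.sum_product]
    rw [key] at ih ⊢
    rw [List.length_cons, Finset.sum_range_succ']
    have h0 : ∑ j ∈ Finset.range (l.length + 1),
        (if 0 < j ∧ (a :: l).getD 0 0 = (a :: l).getD j 0 + 1 then 1 else 0)
        = l.countP (fun b => decide (a = b + 1)) := by
      rw [Finset.sum_range_succ']
      simp only [List.getD_cons_succ, List.getD_cons_zero, Nat.zero_lt_succ, true_and,
        lt_irrefl, false_and, if_false, add_zero]
      rw [← countP_eq_sum]
      apply Finset.sum_congr rfl
      intro j _
      simp
    have h1 : ∀ i, ∑ j ∈ Finset.range (l.length + 1),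
        (if i + 1 < j ∧ (a :: l).getD (i+1) 0 = (a :: l).getD j 0 + 1 then 1 else 0)
        = ∑ j ∈ Finset.range l.length,
          (if i < j ∧ l.getD i 0 = l.getD j 0 + 1 then 1 else 0) := by
      intro i
      rw [Finset.sum_range_succ']
      simp only [List.getD_cons_succ, List.getD_cons_zero, Nat.add_lt_add_iff_right,
        Nat.not_lt_zero, false_and, if_false, add_zero]
    simp only [h1, h0, ih, dii]
    omega

@[simp] lemma cross_nil_left (B : List ℤ) : cross [] B = 0 := rfl
@[simp] lemma cross_nil_right (A : List ℤ) : cross A [] = 0 := by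
  simp [cross]

lemma cross_cons_left (a : ℤ) (A B : List ℤ) :
    cross (a :: A) B = B.countP (fun b => decide (a = b + 1)) + cross A B := by
  simp [cross]

lemma cross_append_left (A A' B : List ℤ) :
    cross (A ++ A') B = cross A B + cross A' B := by
  simp [cross]

lemma cross_append_right (A B B' : List ℤ) :
    cross A (B ++ B') = cross A B + cross A B' := by
  induction A with
  | nil => simp
  | cons a A ih =>
    simp only [cross_cons_left, List.countP_append, ih]
    omega

lemma cross_perm_left {A A' : List ℤ} (h : A.Perm A') (B : List ℤ) :
    cross A B = cross A' B := by
  exact List.Perm.sum_eq (h.map _)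

lemma cross_perm_right (A : List ℤ) {B B' : List ℤ} (h : B.Perm B') :
    cross A B = cross A B' := by
  unfold cross
  congr 1
  apply List.map_congr_left
  intro x _
  exact h.countP_eq _

lemma dii_append (A B : List ℤ) : dii (A ++ B) = dii A + dii B + cross A B := by
  induction A with
  | nil => simp [dii]
  | cons a A ih =>
    simp only [List.cons_append, dii, ih, cross_cons_left]
    rw [List.countP_append]
    omega

lemma DualDyck.pairwise {L : List ℤ} (h : List.Chain' (fun a b => a + 2 ≤ b) L) :
    L.Pairwise (fun a b => a + 2 ≤ b) := by
  have : IsTrans ℤ (fun a b => a + 2 ≤ b) := ⟨fun a b c h1 h2 => by omega⟩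
  exact List.isChain_iff_pairwise.mp h

lemma dii_eq_zero {L : List ℤ} (h : L.Pairwise (fun a b => a + 2 ≤ b)) : dii L = 0 := by
  induction L with
  | nil => rfl
  | cons a l ih =>
    rw [List.pairwise_cons] at h
    simp only [dii, ih h.2, add_zero]
    rw [List.countP_eq_zero]
    intro b hb
    have := h.1 b hb
    simp only [decide_eq_true_eq]
    omega

lemma cross_eq_zero {A B : List ℤ} (h : ∀ x ∈ A, ∀ b ∈ B, x ≠ b + 1) : cross A B = 0 := by
  induction A with
  | nil => rfl
  | cons a A ih =>
    rw [cross_cons_left, ih (fun x hx => h x (List.mem_cons_of_mem a hx)), add_zero,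
      List.countP_eq_zero]
    intro b hb
    simpa using h a List.mem_cons_self b hb

lemma chainUp_pos_s3 {L : List ℤ} (h : L ≠ []) : 1 ≤ chainUp L := by
  match L with
  | [_] => simp [chainUp]
  | a :: b :: t => rw [chainUp]; split <;> omega

lemma chainUp_le (L : List ℤ) : chainUp L ≤ L.length := by
  match L with
  | [] => simp [chainUp]
  | [_] => simp [chainUp]
  | a :: b :: t =>
    have := chainUp_le (b :: t)
    rw [chainUp]; split <;> simp_all <;> omega

lemma chainUp_take {L : List ℤ} (h : L ≠ []) :
    L.take (chainUp L) = (List.range (chainUp L)).map (fun t : ℕ => L.headI + 2 * (t : ℤ)) := by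
  match L with
  | [x] => simp [chainUp, show List.range 1 = [0] from rfl]
  | a :: b :: t =>
    by_cases hb : b = a + 2
    · rw [chainUp, if_pos hb]
      have ih := chainUp_take (L := b :: t) (by simp)
      rw [List.range_succ_eq_map, List.map_cons, List.take_succ_cons, ih]
      simp only [List.headI, List.map_map]
      congr 1
      · push_cast; ring
      · apply List.map_congr_left
        intro s _
        simp only [Function.comp_apply]
        push_cast
        omega
    · rw [chainUp, if_neg hb]
      simp [List.headI, show List.range 1 = [0] from rfl]

lemma chainUp_max {L : List ℤ} (h : chainUp L < L.length) :
    L.getD (chainUp L) 0 ≠ L.headI + 2 * (chainUp L : ℤ) := by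
  match L with
  | [] => simp [chainUp] at h
  | [x] => simp [chainUp] at h
  | a :: b :: t =>
    by_cases hb : b = a + 2
    · rw [chainUp, if_pos hb] at h ⊢
      have ih := chainUp_max (L := b :: t) (by simpa using h)
      simp only [List.getD_cons_succ, List.headI] at ih ⊢
      push_cast
      intro hc
      apply ih
      rw [hc, hb]
      push_cast
      ring
    · rw [chainUp, if_neg hb] at h ⊢
      simpa [List.headI] using hb

/-- positions in a dual Dyck list grow at least by 2 each step -/
lemma dd_getD {L : List ℤ} (hL : L.Pairwise (fun a b => a + 2 ≤ b)) {m : ℕ}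
    (hm : m < L.length) : L.headI + 2 * m ≤ L.getD m 0 := by
  induction m with
  | zero =>
    match L with
    | x :: t => simp
  | succ n ih =>
    match L, hL with
    | x :: t, hL =>
      rw [List.pairwise_cons] at hL
      have hn : n < t.length := by simpa using hm
      have h1 : t.getD n 0 ∈ t := by
        rw [List.getD_eq_getElem _ _ hn]
        exact List.getElem_mem hn
      have := hL.1 _ h1
      have hhead : x + 2 ≤ t.headI := by
        match t, hn with
        | y :: t', _ => exact hL.1 y (by simp)
      have ih2 := dd_getD hL.2 (m := n) hn
      simp only [List.getD_cons_succ, List.headI]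
      push_cast
      omega

lemma mem_ge_head {M : List ℤ} (hM : M.Pairwise (fun a b => a + 2 ≤ b))
    {y : ℤ} (hy : y ∈ M) : M.headI ≤ y := by
  match M with
  | x :: t =>
    rw [List.pairwise_cons] at hM
    rcases List.mem_cons.mp hy with rfl | h
    · simp
    · have := hM.1 y h; simp; omega

/-- every element of `L.drop m` is at least `L.headI + 2*m` -/
lemma dd_mem_drop {L : List ℤ} (hL : L.Pairwise (fun a b => a + 2 ≤ b)) {m : ℕ}
    {y : ℤ} (hy : y ∈ L.drop m) : L.headI + 2 * m ≤ y := by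
  have hm : m < L.length := by
    by_contra h
    rw [List.drop_eq_nil_of_le (by omega)] at hy
    simp at hy
  have h1 := dd_getD hL hm
  have h2 : (L.drop m).headI ≤ y := mem_ge_head hL.drop hy
  rw [List.drop_eq_getElem_cons hm] at h2
  rw [List.getD_eq_getElem _ _ hm] at h1
  simp only [List.headI] at h2
  omega

lemma sum_map_range (n : ℕ) (f : ℕ → ℕ) :
    ((List.range n).map f).sum = ∑ i ∈ Finset.range n, f i := by
  induction n with
  | zero => simp
  | succ m ih => rw [List.range_succ, Finset.sum_range_succ, List.map_append, List.sum_append, ih]; simp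

lemma countP_range (j : ℕ) (p : ℕ → Bool) :
    (List.range j).countP p = ((Finset.range j).filter (fun s => p s)).card := by
  induction j with
  | zero => simp
  | succ m ih =>
    rw [List.range_succ, List.countP_append, Finset.range_add_one, Finset.filter_insert]
    by_cases h : p m <;> simp [h, ih, Finset.card_insert_of_notMem]

lemma cross_chain_1 (c : ℤ) (k j : ℕ) (hkj : k ≤ j) :
    cross ((List.range k).map (fun t : ℕ => c + 1 + 2 * (t : ℤ)))
      ((List.range j).map (fun s : ℕ => c + 2 * (s : ℤ))) = k := by
  unfold cross
  rw [List.map_map]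
  have : ∀ t ∈ List.range k,
      ((fun x => ((List.range j).map (fun s : ℕ => c + 2 * (s:ℤ))).countP (fun b => decide (x = b + 1))) ∘
        (fun t : ℕ => c + 1 + 2 * (t:ℤ))) t = 1 := by
    intro t ht
    rw [List.mem_range] at ht
    simp only [Function.comp_apply, List.countP_map]
    have hpred : ∀ s : ℕ, ((fun b => decide (c + 1 + 2*(t:ℤ) = b + 1)) ∘ (fun s : ℕ => c + 2*(s:ℤ))) s
        = decide (s = t) := by
      intro s
      simp only [Function.comp_apply, decide_eq_decide]
      omega
    rw [funext hpred, countP_range]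
    have : (Finset.range j).filter (fun s => decide (s = t)) = {t} := by
      ext s
      simp only [Finset.mem_filter, Finset.mem_range, Finset.mem_singleton, decide_eq_true_eq]
      omega
    rw [this, Finset.card_singleton]
  rw [List.map_congr_left this]
  simp [List.map_const']

lemma cross_chain_2 (c : ℤ) (k j : ℕ) (hkj : k < j) :
    cross ((List.range j).map (fun s : ℕ => c + 2 * (s : ℤ)))
      ((List.range k).map (fun t : ℕ => c + 1 + 2 * (t : ℤ))) = k := by
  unfold cross
  rw [List.map_map, sum_map_range]
  have key : ∀ s : ℕ, ((fun x => ((List.range k).map (fun t : ℕ => c + 1 + 2*(t:ℤ))).countP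
      (fun b => decide (x = b + 1))) ∘ (fun s : ℕ => c + 2 * (s:ℤ))) s
      = if 1 ≤ s ∧ s ≤ k then 1 else 0 := by
    intro s
    simp only [Function.comp_apply, List.countP_map]
    have hpred : ∀ t : ℕ, ((fun b => decide (c + 2*(s:ℤ) = b + 1)) ∘ (fun t : ℕ => c + 1 + 2*(t:ℤ))) t
        = decide (t + 1 = s) := by
      intro t
      simp only [Function.comp_apply, decide_eq_decide]
      omega
    rw [funext hpred, countP_range]
    by_cases hs : 1 ≤ s ∧ s ≤ k
    · rw [if_pos hs]
      have : (Finset.range k).filter (fun t => decide (t + 1 = s)) = {s - 1} := by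
        ext t
        simp only [Finset.mem_filter, Finset.mem_range, Finset.mem_singleton, decide_eq_true_eq]
        omega
      rw [this, Finset.card_singleton]
    · rw [if_neg hs]
      have : (Finset.range k).filter (fun t => decide (t + 1 = s)) = ∅ := by
        ext t
        simp only [Finset.mem_filter, Finset.mem_range, Finset.notMem_empty, decide_eq_true_eq,
          iff_false, not_and]
        omega
      rw [this, Finset.card_empty]
  simp only [key]
  rw [← Finset.card_filter]
  have : (Finset.range j).filter (fun s => 1 ≤ s ∧ s ≤ k) = Finset.Icc 1 k := by
    ext s
    simp only [Finset.mem_filter, Finset.mem_range, Finset.mem_Icc]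
    omega
  rw [this]
  simp [Nat.card_Icc]

lemma findIdx?_spec {p : ℤ → Bool} {l : List ℤ} {i : ℕ} (h : l.findIdx? p = some i) :
    i < l.length ∧ (∀ x ∈ l.take i, p x = false) ∧ p (l.getD i 0) = true := by
  induction l generalizing i with
  | nil => simp at h
  | cons x xs ih =>
    rw [List.findIdx?_cons] at h
    by_cases hx : p x
    · rw [if_pos hx] at h
      simp only [Option.some_inj] at h
      subst h
      simpa using hx
    · rw [if_neg hx] at h
      rcases ho : xs.findIdx? p with _ | v
      · rw [ho] at h; simp at h
      · rw [ho] at h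
        simp only [Option.map_some, Option.some_inj] at h
        subst h
        obtain ⟨h1, h2, h3⟩ := ih ho
        refine ⟨by simp; omega, ?_, by simpa using h3⟩
        intro y hy
        rw [List.take_succ_cons] at hy
        rcases List.mem_cons.mp hy with rfl | hy'
        · simpa using hx
        · exact h2 y hy'

lemma step_spec {R F X R' F'' : List ℤ} {a : ℤ}
    (hR : R.Pairwise (fun u v => u + 2 ≤ v))
    (hF : (a :: F).Pairwise (fun u v => u + 2 ≤ v))
    (h : rowsertStep R a F = (X, R', F'')) :
    R'.Pairwise (fun u v => u + 2 ≤ v) ∧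
    F''.Pairwise (fun u v => u + 2 ≤ v) ∧
    X.Pairwise (fun u v => u + 2 ≤ v) ∧
    F''.length ≤ F.length ∧
    (X ++ R' ++ F'').Perm (R ++ a :: F) ∧
    cross X R' + cross X F'' + cross R' F'' = cross R (a :: F) := by
  have hFb : ∀ b ∈ F, a + 2 ≤ b := (List.pairwise_cons.mp hF).1
  have hFt : F.Pairwise (fun u v => u + 2 ≤ v) := (List.pairwise_cons.mp hF).2
  rw [rowsertStep] at h
  rcases hfind : R.findIdx? (fun r => decide (a ≤ r + 1)) with _ | i <;> rw [hfind] at h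
  · -- Case 0
    simp only [Prod.mk.injEq] at h
    obtain ⟨rfl, rfl, rfl⟩ := h
    have hRa : ∀ r ∈ R, r + 2 ≤ a := by
      intro r hr
      have := List.findIdx?_eq_none_iff.mp hfind r hr
      simp only [decide_eq_false_iff_not, not_le] at this
      omega
    refine ⟨?_, hFt, by simp, le_refl _, ?_, ?_⟩
    · rw [List.pairwise_append]
      exact ⟨hR, by simp, by intro x hx y hy; simp at hy; subst hy; exact hRa x hx⟩
    · have : ([] : List ℤ) ++ (R ++ [a]) ++ F = R ++ a :: F := by simp
      rw [this]
    · have z1 : cross [a] F = 0 := by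
        apply cross_eq_zero
        intro x hx b hb
        simp at hx; subst hx
        have := hFb b hb; omega
      have z2 : cross R [a] = 0 := by
        apply cross_eq_zero
        intro x hx b hb
        simp at hb; subst hb
        have := hRa x hx; omega
      rw [show a :: F = [a] ++ F from rfl]
      simp only [cross_append_left, cross_append_right, cross_nil_left]
      omega
  · obtain ⟨hil, htk, hgd⟩ := findIdx?_spec hfind
    simp only [decide_eq_true_eq] at hgd
    simp only at h
    have hTa : ∀ x ∈ R.take i, x + 1 < a := by
      intro x hx
      have := htk x hx
      simp only [decide_eq_false_iff_not, not_le] at this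
      omega
    split_ifs at h with h1 h2
    · -- Case 1
      simp only [Prod.mk.injEq] at h
      obtain ⟨rfl, rfl, rfl⟩ := h
      set ri := R.getD i 0 with hri
      set T := R.take i with hT
      set D₂ := R.drop (i + 1) with hD₂
      have hsplit : R = T ++ ri :: D₂ := by
        conv_lhs => rw [← List.take_append_drop i R]
        rw [List.drop_eq_getElem_cons hil, hri, List.getD_eq_getElem _ _ hil]
      have hset : R.set i a = T ++ a :: D₂ := by
        rw [List.set_eq_take_append_cons_drop, if_pos hil]
      have hRP : (T ++ ri :: D₂).Pairwise (fun u v => u + 2 ≤ v) := hsplit ▸ hR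
      rw [List.pairwise_append] at hRP
      obtain ⟨hTp, hconsp, hTcross⟩ := hRP
      rw [List.pairwise_cons] at hconsp
      obtain ⟨hriD, hD₂p⟩ := hconsp
      refine ⟨?_, hFt, by simp, le_refl _, ?_, ?_⟩
      · rw [hset, List.pairwise_append, List.pairwise_cons]
        refine ⟨hTp, ⟨fun y hy => by have := hriD y hy; omega, hD₂p⟩, ?_⟩
        intro x hx y hy
        rcases List.mem_cons.mp hy with rfl | hy'
        · have := hTa x hx; omega
        · exact hTcross x hx y (List.mem_cons_of_mem _ hy')
      · rw [hset]
        conv_rhs => rw [hsplit]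
        show ([ri] ++ (T ++ ([a] ++ D₂)) ++ F).Perm ((T ++ ([ri] ++ D₂)) ++ ([a] ++ F))
        rw [← Multiset.coe_eq_coe]
        simp only [← Multiset.coe_add]
        abel
      · rw [hset]
        conv_rhs => rw [hsplit]
        rw [show a :: D₂ = [a] ++ D₂ from rfl, show ri :: D₂ = [ri] ++ D₂ from rfl,
          show a :: F = [a] ++ F from rfl]
        simp only [cross_append_left, cross_append_right]
        have hTri : ∀ x ∈ T, x + 2 ≤ ri := fun x hx => hTcross x hx ri (by simp)
        have z1 : cross [ri] T = 0 := by
          apply cross_eq_zero; intro x hx b hb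
          simp at hx; subst hx
          have := hTri b hb; omega
        have z2 : cross [ri] D₂ = 0 := by
          apply cross_eq_zero; intro x hx b hb
          simp at hx; subst hx
          have := hriD b hb; omega
        have z3 : cross [a] F = 0 := by
          apply cross_eq_zero; intro x hx b hb
          simp at hx; subst hx
          have := hFb b hb; omega
        have z4 : cross T [a] = 0 := by
          apply cross_eq_zero; intro x hx b hb
          simp at hb; subst hb
          have := hTa x hx; omega
        have z5 : cross D₂ [a] = 0 := by
          apply cross_eq_zero; intro x hx b hb
          simp at hb; subst hb
          have := hriD x hx
          omega
        omega
    · -- Case 2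
      simp only [Prod.mk.injEq] at h
      obtain ⟨rfl, rfl, rfl⟩ := h
      set ri := R.getD i 0 with hri
      have ha : a = ri + 1 := by omega
      set T := R.take i with hT
      set D := R.drop i with hD
      set j := chainUp D with hj
      set k := chainUp (a :: F) with hk
      have hDcons : D = ri :: R.drop (i+1) := by
        rw [hD, List.drop_eq_getElem_cons hil, hri, List.getD_eq_getElem _ _ hil]
      have hDne : D ≠ [] := by rw [hDcons]; simp
      have hDhead : D.headI = ri := by rw [hDcons]; rfl
      have hDp : D.Pairwise (fun u v => u + 2 ≤ v) := by rw [hD]; exact hR.drop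
      have hj1 : 1 ≤ j := chainUp_pos_s3 hDne
      have hjlen : j ≤ D.length := hj ▸ chainUp_le D
      have hk1 : 1 ≤ k := chainUp_pos_s3 (by simp)
      have hCtake : D.take j = (List.range j).map (fun t : ℕ => ri + 2 * (t:ℤ)) := by
        rw [hj, chainUp_take hDne, hDhead]
      have hAtake : (a :: F).take k = (List.range k).map (fun t : ℕ => a + 2 * (t:ℤ)) := by
        rw [hk, chainUp_take (by simp : (a :: F) ≠ [])]
        rfl
      have hAj : (a :: F).take j = (List.range j).map (fun t : ℕ => a + 2 * (t:ℤ)) := by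
        have h' : (a :: F).take j = ((a :: F).take k).take j := by
          rw [List.take_take, inf_eq_left.mpr h2]
        rw [h', hAtake, ← List.map_take, List.take_range, inf_eq_left.mpr h2]
      set C := (List.range j).map (fun t : ℕ => ri + 2 * (t:ℤ)) with hC
      set A := (List.range j).map (fun t : ℕ => a + 2 * (t:ℤ)) with hA
      set R₂ := R.drop (i + j) with hR₂def
      have hR₂D : D.drop j = R₂ := by rw [hR₂def, hD, List.drop_drop]
      have hsplitD : R = T ++ (C ++ R₂) := by
        have hDsplit : D = C ++ R₂ := by rw [← hCtake, ← hR₂D, List.take_append_drop]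
        rw [← hDsplit, hT, hD, List.take_append_drop]
      set F2 := (a :: F).drop j with hF2
      have haF : a :: F = A ++ F2 := by
        rw [hF2]
        conv_lhs => rw [← List.take_append_drop j (a :: F)]
        rw [hAj]
      have hTp : T.Pairwise (fun u v => u + 2 ≤ v) := by
        rw [hT]; exact List.Pairwise.sublist (List.take_sublist i R) hR
      have hR₂p : R₂.Pairwise (fun u v => u + 2 ≤ v) := by rw [hR₂def]; exact hR.drop
      have hF2p : F2.Pairwise (fun u v => u + 2 ≤ v) := by rw [hF2]; exact hF.drop
      have hTD : ∀ x ∈ T, ∀ y ∈ D, x + 2 ≤ y := by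
        have hTDp : (T ++ D).Pairwise (fun u v => u + 2 ≤ v) := by
          rw [hT, hD, List.take_append_drop]; exact hR
        exact (List.pairwise_append.mp hTDp).2.2
      have hTri : ∀ x ∈ T, x + 2 ≤ ri := fun x hx => hTD x hx ri (by rw [hDcons]; simp)
      have hAm : ∀ x ∈ A, a ≤ x ∧ x ≤ a + 2 * (j:ℤ) - 2 := by
        intro x hx
        rw [hA] at hx
        obtain ⟨t, ht, rfl⟩ := List.mem_map.mp hx
        rw [List.mem_range] at ht
        constructor <;> [omega; (push_cast; omega)]
      have hCm : ∀ x ∈ C, ri ≤ x ∧ x ≤ ri + 2 * (j:ℤ) - 2 := by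
        intro x hx
        rw [hC] at hx
        obtain ⟨t, ht, rfl⟩ := List.mem_map.mp hx
        rw [List.mem_range] at ht
        constructor <;> [omega; (push_cast; omega)]
      have hApw : A.Pairwise (fun u v => u + 2 ≤ v) := by
        rw [hA, List.pairwise_map]
        exact (List.pairwise_lt_range (n := j)).imp (by intro s t hst; push_cast; omega)
      have hCpw : C.Pairwise (fun u v => u + 2 ≤ v) := by
        rw [hC, List.pairwise_map]
        exact (List.pairwise_lt_range (n := j)).imp (by intro s t hst; push_cast; omega)
      have hF2b : ∀ y ∈ F2, a + 2 * (j:ℤ) ≤ y := by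
        intro y hy
        rw [hF2] at hy
        have := dd_mem_drop hF hy
        simpa using this
      have hR₂b : ∀ y ∈ R₂, ri + 2 * (j:ℤ) + 1 ≤ y := by
        intro y hy
        rw [← hR₂D] at hy
        have hjD : j < D.length := by
          rcases lt_or_eq_of_le hjlen with h' | h'
          · exact h'
          · exfalso
            rw [List.drop_eq_nil_of_le (le_of_eq h'.symm)] at hy
            simp at hy
        have hmax := chainUp_max (L := D) (by rw [← hj]; exact hjD)
        rw [hDhead, ← hj] at hmax
        have hg := dd_getD hDp hjD
        rw [hDhead] at hg
        have hhy : D.getD j 0 ≤ y := by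
          have h5 := mem_ge_head (hDp.drop (i := j)) hy
          rw [List.drop_eq_getElem_cons hjD] at h5
          rw [List.getD_eq_getElem _ _ hjD]
          exact h5
        omega
      refine ⟨?_, hF2p, by rw [hCtake]; exact hCpw, ?_, ?_, ?_⟩
      · rw [hAj, List.pairwise_append, List.pairwise_append]
        refine ⟨⟨hTp, hApw, ?_⟩, hR₂p, ?_⟩
        · intro x hx y hy
          have h6 := hTa x hx
          have h7 := (hAm y hy).1
          omega
        · intro x hx y hy
          have h8 := hR₂b y hy
          rcases List.mem_append.mp hx with hx' | hx'
          · have := hTri x hx'; omega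
          · have := (hAm x hx').2; omega
      · rw [hF2, List.length_drop]
        simp only [List.length_cons]
        omega
      · rw [hCtake, hAj]
        conv_rhs => rw [hsplitD, haF]
        rw [← Multiset.coe_eq_coe]
        simp only [← Multiset.coe_add]
        abel
      · rw [hCtake, hAj]
        conv_rhs => rw [hsplitD, haF]
        simp only [cross_append_left, cross_append_right]
        have zCT : cross C T = 0 := by
          apply cross_eq_zero; intro x hx b hb
          have := (hCm x hx).1
          have := hTri b hb
          omega
        have zCR₂ : cross C R₂ = 0 := by
          apply cross_eq_zero; intro x hx b hb
          have := (hCm x hx).2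
          have := hR₂b b hb
          omega
        have zAF : cross A F2 = 0 := by
          apply cross_eq_zero; intro x hx b hb
          have := (hAm x hx).2
          have := hF2b b hb
          omega
        have zTA : cross T A = 0 := by
          apply cross_eq_zero; intro x hx b hb
          have := hTa x hx
          have := (hAm b hb).1
          omega
        have zR₂A : cross R₂ A = 0 := by
          apply cross_eq_zero; intro x hx b hb
          have := hR₂b x hx
          have := (hAm b hb).2
          omega
        omega
    · -- Case 3
      simp only [Prod.mk.injEq] at h
      obtain ⟨rfl, rfl, rfl⟩ := h
      have hkj : chainUp (a :: F) < chainUp (R.drop i) := not_le.mp h2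
      set ri := R.getD i 0 with hri
      have ha : a = ri + 1 := by omega
      set T := R.take i with hT
      set D := R.drop i with hD
      set j := chainUp D with hj
      set k := chainUp (a :: F) with hk
      have hDcons : D = ri :: R.drop (i+1) := by
        rw [hD, List.drop_eq_getElem_cons hil, hri, List.getD_eq_getElem _ _ hil]
      have hDne : D ≠ [] := by rw [hDcons]; simp
      have hDhead : D.headI = ri := by rw [hDcons]; rfl
      have hDp : D.Pairwise (fun u v => u + 2 ≤ v) := by rw [hD]; exact hR.drop
      have hjlen : j ≤ D.length := hj ▸ chainUp_le D
      have hk1 : 1 ≤ k := chainUp_pos_s3 (by simp)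
      have hCtake : D.take j = (List.range j).map (fun t : ℕ => ri + 2 * (t:ℤ)) := by
        rw [hj, chainUp_take hDne, hDhead]
      have hAtake : (a :: F).take k = (List.range k).map (fun t : ℕ => a + 2 * (t:ℤ)) := by
        rw [hk, chainUp_take (by simp : (a :: F) ≠ [])]
        rfl
      set C := (List.range j).map (fun t : ℕ => ri + 2 * (t:ℤ)) with hC
      set Ak := (List.range k).map (fun t : ℕ => a + 2 * (t:ℤ)) with hA
      set R₂ := R.drop (i + j) with hR₂def
      have hR₂D : D.drop j = R₂ := by rw [hR₂def, hD, List.drop_drop]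
      have hsplitD : R = T ++ (C ++ R₂) := by
        have hDsplit : D = C ++ R₂ := by rw [← hCtake, ← hR₂D, List.take_append_drop]
        rw [← hDsplit, hT, hD, List.take_append_drop]
      set F2 := (a :: F).drop k with hF2
      have haF : a :: F = Ak ++ F2 := by
        rw [hF2]
        conv_lhs => rw [← List.take_append_drop k (a :: F)]
        rw [hAtake]
      have hF2p : F2.Pairwise (fun u v => u + 2 ≤ v) := by rw [hF2]; exact hF.drop
      have hTD : ∀ x ∈ T, ∀ y ∈ D, x + 2 ≤ y := by
        have hTDp : (T ++ D).Pairwise (fun u v => u + 2 ≤ v) := by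
          rw [hT, hD, List.take_append_drop]; exact hR
        exact (List.pairwise_append.mp hTDp).2.2
      have hTri : ∀ x ∈ T, x + 2 ≤ ri := fun x hx => hTD x hx ri (by rw [hDcons]; simp)
      have hAm : ∀ x ∈ Ak, a ≤ x ∧ x ≤ a + 2 * (k:ℤ) - 2 := by
        intro x hx
        rw [hA] at hx
        obtain ⟨t, ht, rfl⟩ := List.mem_map.mp hx
        rw [List.mem_range] at ht
        constructor <;> [omega; (push_cast; omega)]
      have hApw : Ak.Pairwise (fun u v => u + 2 ≤ v) := by
        rw [hA, List.pairwise_map]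
        exact (List.pairwise_lt_range (n := k)).imp (by intro s t hst; push_cast; omega)
      have hR₂b : ∀ y ∈ R₂, ri + 2 * (j:ℤ) + 1 ≤ y := by
        intro y hy
        rw [← hR₂D] at hy
        have hjD : j < D.length := by
          rcases lt_or_eq_of_le hjlen with h' | h'
          · exact h'
          · exfalso
            rw [List.drop_eq_nil_of_le (le_of_eq h'.symm)] at hy
            simp at hy
        have hmax := chainUp_max (L := D) (by rw [← hj]; exact hjD)
        rw [hDhead, ← hj] at hmax
        have hg := dd_getD hDp hjD
        rw [hDhead] at hg
        have hhy : D.getD j 0 ≤ y := by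
          have h5 := mem_ge_head (hDp.drop (i := j)) hy
          rw [List.drop_eq_getElem_cons hjD] at h5
          rw [List.getD_eq_getElem _ _ hjD]
          exact h5
        omega
      have hF2b : ∀ y ∈ F2, a + 2 * (k:ℤ) + 1 ≤ y := by
        intro y hy
        rw [hF2] at hy
        have hkF : k < (a :: F).length := by
          rcases lt_or_eq_of_le (hk ▸ chainUp_le (a :: F)) with h' | h'
          · exact h'
          · exfalso
            rw [List.drop_eq_nil_of_le (le_of_eq h'.symm)] at hy
            simp at hy
        have hmax := chainUp_max (L := a :: F) (by rw [← hk]; exact hkF)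
        rw [show (a :: F).headI = a from rfl, ← hk] at hmax
        have hg := dd_getD hF hkF
        rw [show (a :: F).headI = a from rfl] at hg
        have hhy : (a :: F).getD k 0 ≤ y := by
          have h5 := mem_ge_head (hF.drop (i := k)) hy
          rw [List.drop_eq_getElem_cons hkF] at h5
          rw [List.getD_eq_getElem _ _ hkF]
          exact h5
        omega
      refine ⟨hR, hF2p, by rw [hAtake]; exact hApw, ?_, ?_, ?_⟩
      · rw [hF2, List.length_drop]
        simp only [List.length_cons]
        omega
      · rw [hAtake]
        conv_rhs => rw [haF]
        rw [← Multiset.coe_eq_coe]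
        simp only [← Multiset.coe_add]
        abel
      · rw [hAtake]
        conv_rhs => rw [haF]
        rw [hsplitD]
        simp only [cross_append_left, cross_append_right]
        have hcc1 : cross Ak C = k := by
          rw [hA, hC, ha]
          exact cross_chain_1 ri k j (le_of_lt hkj)
        have hcc2 : cross C Ak = k := by
          rw [hA, hC, ha]
          exact cross_chain_2 ri k j hkj
        have zAT : cross Ak T = 0 := by
          apply cross_eq_zero; intro x hx b hb
          have := (hAm x hx).1
          have := hTri b hb
          omega
        have zAR₂ : cross Ak R₂ = 0 := by
          apply cross_eq_zero; intro x hx b hb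
          have := (hAm x hx).2
          have := hR₂b b hb
          omega
        have zAF2 : cross Ak F2 = 0 := by
          apply cross_eq_zero; intro x hx b hb
          have := (hAm x hx).2
          have := hF2b b hb
          omega
        have zTA : cross T Ak = 0 := by
          apply cross_eq_zero; intro x hx b hb
          have := hTa x hx
          have := (hAm b hb).1
          omega
        have zR₂A : cross R₂ Ak = 0 := by
          apply cross_eq_zero; intro x hx b hb
          have := hR₂b x hx
          have := (hAm b hb).2
          omega
        omega

lemma rowsertAux_spec : ∀ (n : ℕ) (E R F : List ℤ),
    R.Pairwise (fun u v => u + 2 ≤ v) → F.Pairwise (fun u v => u + 2 ≤ v) →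
    F.length ≤ n →
    dii ((rowsertAux n E R F).1 ++ (rowsertAux n E R F).2) = dii (E ++ R ++ F) := by
  intro n
  induction n with
  | zero =>
    intro E R F _ _ hlen
    have : F = [] := List.length_eq_zero_iff.mp (by omega)
    subst this
    simp [rowsertAux]
  | succ m ih =>
    intro E R F hR hF hlen
    match F with
    | [] => simp [rowsertAux]
    | a :: F =>
      rw [rowsertAux]
      rcases hs : rowsertStep R a F with ⟨X, R', F''⟩
      simp only [hs]
      obtain ⟨hR'p, hF''p, hXp, hlen', hperm, hcross⟩ := step_spec hR hF hs
      have hlen2 : F''.length ≤ m := by simp at hlen; omega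
      rw [ih (E ++ X) R' F'' hR'p hF''p hlen2]
      -- now pure algebra
      have e1 : dii ((E ++ X) ++ R' ++ F'') = dii E + dii X + dii R' + dii F''
          + cross E X + cross E R' + cross E F'' + cross X R' + cross X F''
          + cross R' F'' := by
        simp only [dii_append, cross_append_left, cross_append_right]
        omega
      have e2 : dii (E ++ R ++ (a :: F)) = dii E + dii R + dii (a :: F)
          + cross E R + cross E (a :: F) + cross R (a :: F) := by
        simp only [dii_append, cross_append_left, cross_append_right]
        omega
      have hEperm : cross E (X ++ R' ++ F'') = cross E (R ++ a :: F) := by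
        apply cross_perm_right
        exact hperm
      simp only [cross_append_right] at hEperm
      have hz1 : dii X = 0 := dii_eq_zero hXp
      have hz2 : dii R' = 0 := dii_eq_zero hR'p
      have hz3 : dii F'' = 0 := dii_eq_zero hF''p
      have hz4 : dii R = 0 := dii_eq_zero hR
      have hz5 : dii (a :: F) = 0 := dii_eq_zero hF
      rw [e1, e2]
      omega

/-- **`di`-preservation for row insertion.** -/
theorem rowsert_di_preservation (R0 F0 E R : List ℤ)
    (hR0 : DualDyck R0) (hF0 : DualDyck F0)
    (h : rowsert R0 F0 = (E, R)) :
    di (R0 ++ F0) = di (E ++ R) := by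
  rw [di_eq_dii, di_eq_dii]
  have hR0p : R0.Pairwise (fun u v => u + 2 ≤ v) := DualDyck.pairwise hR0
  have hF0p : F0.Pairwise (fun u v => u + 2 ≤ v) := DualDyck.pairwise hF0
  have := rowsertAux_spec F0.length [] R0 F0 hR0p hF0p (le_refl _)
  rw [show rowsertAux F0.length [] R0 F0 = rowsert R0 F0 from rfl, h] at this
  simpa using this.symm
end

section
/- Let C = (c_0,…,c_{r−1}) be an ordinary Dyck sequence whose leftmost eligible index is i, and set x = c_i. Then c_i is the leftmost occurrence of the value x in C; consequently i > 0 and c_{i−1} = x − 1. Moreover, deleting the entry at index i from C produces an ordinary Dyck sequence. -/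
/-- A finite integer sequence is an *affine Dyck sequence* if each entry is at
most the previous entry plus 1. -/
def AffineDyck (x : List ℤ) : Prop := List.Chain' (fun a b => b ≤ a + 1) x

/-- An *ordinary Dyck sequence* is a nonempty affine Dyck sequence starting at
`0` with all entries nonnegative. -/
def OrdDyck (x : List ℤ) : Prop :=
  x ≠ [] ∧ AffineDyck x ∧ x.getD 0 0 = 0 ∧ ∀ a ∈ x, 0 ≤ a

/-- An index `j` of `C` is *eligible* if there is exactly one index `i < j`
with `C i = C j − 1`, and either `j` is the final index or the next entry is
at most `C j`. -/
def Eligible (C : List ℤ) (j : ℕ) : Prop :=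
  j < C.length ∧
  ((Finset.range j).filter (fun i => C.getD i 0 = C.getD j 0 - 1)).card = 1 ∧
  (j + 1 = C.length ∨ C.getD (j + 1) 0 ≤ C.getD j 0)

private lemma affine_step {C : List ℤ} (h : AffineDyck C) {k : ℕ} (hk : k + 1 < C.length) :
    C.getD (k+1) 0 ≤ C.getD k 0 + 1 := by
  have h2 := List.isChain_iff_getElem.mp h k (by omega)
  rw [List.getD_eq_getElem _ _ hk, List.getD_eq_getElem _ _ (Nat.lt_of_succ_lt hk)]
  simpa using h2

private lemma card_filter_one_iff (j : ℕ) (P : ℕ → Prop) [DecidablePred P] :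
    ((Finset.range j).filter P).card = 1 ↔ ∃! q, q < j ∧ P q := by
  rw [Finset.card_eq_one]
  constructor
  · rintro ⟨a, ha⟩
    have hm : ∀ q, (q < j ∧ P q) ↔ q = a := by
      intro q
      rw [← Finset.mem_singleton, ← ha, Finset.mem_filter, Finset.mem_range]
    exact ⟨a, (hm a).mpr rfl, fun q hq => (hm q).mp hq⟩
  · rintro ⟨a, ha, hu⟩
    refine ⟨a, Finset.ext fun q => ?_⟩
    simp only [Finset.mem_filter, Finset.mem_range, Finset.mem_singleton]
    exact ⟨fun h => hu q h, fun h => h ▸ ha⟩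

private lemma key (n : ℕ) (c : ℕ → ℤ)
    (hstep : ∀ k, k + 1 < n → c (k+1) ≤ c k + 1)
    (hnn : ∀ k, k < n → 0 ≤ c k)
    (hc0 : c 0 = 0)
    (i : ℕ) (hilt : i < n)
    (huniq : ∃! j0, j0 < i ∧ c j0 = c i - 1)
    (hmin : ∀ j, j < n → (∃! j0, j0 < j ∧ c j0 = c j - 1) →
        (j + 1 = n ∨ c (j+1) ≤ c j) → i ≤ j) :
    (∀ p, p < i → c p ≠ c i) ∧ 0 < i ∧ c (i-1) = c i - 1 := by
  classical
  obtain ⟨j0, ⟨hj0i, hj0v⟩, hj0u⟩ := huniq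
  have hx1 : 1 ≤ c i := by
    have := hnn j0 (lt_trans hj0i hilt)
    omega
  -- `f` is the least index whose value is at least `c i`
  have hfe : ∃ k, k ≤ i ∧ c i ≤ c k := ⟨i, le_refl _, le_refl _⟩
  set f := Nat.find hfe with hf
  obtain ⟨hfi, hfx⟩ := Nat.find_spec hfe
  rw [← hf] at hfi hfx
  have hflt : ∀ q, q < f → c q < c i := by
    intro q hq
    have h1 := Nat.find_min hfe hq
    push_neg at h1
    exact h1 (le_trans (le_of_lt hq) hfi)
  have hf1 : 1 ≤ f := by
    by_contra h
    have hf0 : f = 0 := by omega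
    rw [hf0, hc0] at hfx
    omega
  have hfn : f < n := lt_of_le_of_lt hfi hilt
  have hsf : c f ≤ c (f-1) + 1 := by
    have h1 := hstep (f-1) (by omega)
    rwa [Nat.sub_add_cancel hf1] at h1
  have hfm1 : c (f-1) < c i := hflt (f-1) (by omega)
  have hcf : c f = c i := by omega
  have hcf1 : c (f-1) = c i - 1 := by omega
  have hfj0 : f - 1 = j0 := hj0u (f-1) ⟨by omega, hcf1⟩
  have huniq' : ∀ q, q < i → c q = c i - 1 → q = f - 1 := by
    intro q h1 h2
    rw [hfj0]; exact hj0u q ⟨h1, h2⟩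
  -- intermediate value fact
  have hIV : ∀ b, b < n → ∀ a, a ≤ b → c a < c i → c i ≤ c b →
      ∃ r, a ≤ r ∧ r < b ∧ c r = c i - 1 := by
    intro b
    induction b with
    | zero =>
      intro _ a ha h1 h2
      have : a = 0 := by omega
      subst this; omega
    | succ b ih =>
      intro hbn a ha h1 h2
      rcases Nat.lt_or_ge a (b+1) with ha' | ha'
      · have hab : a ≤ b := by omega
        rcases le_or_gt (c i) (c b) with h | h
        · obtain ⟨r, hr1, hr2, hr3⟩ := ih (by omega) a hab h1 h
          exact ⟨r, hr1, by omega, hr3⟩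
        · have := hstep b hbn
          exact ⟨b, hab, by omega, by omega⟩
      · have : a = b + 1 := by omega
        subst this; omega
  have hfi' : f = i := by
    by_contra hne
    have hflti : f < i := lt_of_le_of_ne hfi hne
    -- all values on [f, i] are at least c i
    have hge : ∀ q, f ≤ q → q ≤ i → c i ≤ c q := by
      intro q h1 h2
      by_contra h
      push_neg at h
      have hqi : q < i := by
        rcases Nat.eq_or_lt_of_le h2 with h' | h'
        · subst h'; omega
        · exact h'
      obtain ⟨r, hr1, hr2, hr3⟩ := hIV i hilt q (le_of_lt hqi) h (le_refl _)
      have := huniq' r hr2 hr3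
      omega
    -- there is a non-ascent in [f, i)
    have hna : ∃ k, f ≤ k ∧ k < i ∧ c (k+1) ≤ c k := by
      by_contra h
      push_neg at h
      have hasc : ∀ k, f ≤ k → k ≤ i → c f + ((k - f : ℕ) : ℤ) ≤ c k := by
        intro k
        induction k with
        | zero =>
          intro h1 h2
          have hf0 : f = 0 := by omega
          rw [hf0]; simp
        | succ k ih =>
          intro h1 h2
          rcases Nat.lt_or_ge k f with h' | h'
          · have hfk : f = k + 1 := by omega
            rw [hfk]; simp
          · have hki : k < i := by omega
            have h3 := h k h' hki
            have h4 := ih h' (le_of_lt hki)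
            have h5 : (k + 1 - f : ℕ) = (k - f : ℕ) + 1 := by omega
            rw [h5]
            push_cast
            omega
      have h6 := hasc i (le_of_lt hflti) (le_refl _)
      have h7 : (1 : ℤ) ≤ ((i - f : ℕ) : ℤ) := by
        have : 1 ≤ i - f := by omega
        exact_mod_cast this
      omega
    set p := Nat.find hna with hp
    obtain ⟨hpf, hpi, hpd⟩ := Nat.find_spec hna
    rw [← hp] at hpf hpi hpd
    have hpmin : ∀ q, f ≤ q → q < p → c (q+1) = c q + 1 := by
      intro q h1 h2
      have h3 := Nat.find_min hna h2
      push_neg at h3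
      have h4 := h3 h1 (by omega)
      have h5 := hstep q (by omega)
      omega
    have hrun : ∀ k, f ≤ k → k ≤ p → c k = c i + ((k - f : ℕ) : ℤ) := by
      intro k
      induction k with
      | zero =>
        intro h1 h2
        have hf0 : f = 0 := by omega
        have : c 0 = c i := by rw [← hf0]; exact hcf
        simp [this]
      | succ k ih =>
        intro h1 h2
        rcases Nat.lt_or_ge k f with h' | h'
        · have hfk : f = k + 1 := by omega
          have : c (k+1) = c i := by rw [← hfk]; exact hcf
          simp [this, hfk]
        · have h3 := hpmin k h' (by omega)
          have h4 := ih h' (by omega)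
          have h5 : (k + 1 - f : ℕ) = (k - f : ℕ) + 1 := by omega
          rw [h5]
          push_cast
          omega
    -- p is eligible, contradicting minimality of i
    have hple : ∃! q, q < p ∧ c q = c p - 1 := by
      rcases Nat.eq_or_lt_of_le hpf with hfp | hfp
      · -- p = f
        refine ⟨f - 1, ⟨by omega, by rw [← hfp]; omega⟩, ?_⟩
        intro q ⟨hq1, hq2⟩
        have hq3 : c q = c i - 1 := by rw [← hfp] at hq2; omega
        exact huniq' q (by omega) hq3
      · -- f < p
        have hcp : c p = c i + ((p - f : ℕ) : ℤ) := hrun p hpf (le_refl _)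
        have hcp1 : c (p-1) = c i + ((p - 1 - f : ℕ) : ℤ) := hrun (p-1) (by omega) (by omega)
        have hd : ((p - f : ℕ) : ℤ) = ((p - 1 - f : ℕ) : ℤ) + 1 := by
          have : (p - f : ℕ) = (p - 1 - f : ℕ) + 1 := by omega
          exact_mod_cast this
        refine ⟨p - 1, ⟨by omega, by omega⟩, ?_⟩
        intro q ⟨hq1, hq2⟩
        have hqf : f ≤ q := by
          by_contra h
          push_neg at h
          have h1 := hflt q h
          have h2 : (1 : ℤ) ≤ ((p - f : ℕ) : ℤ) := by
            have : 1 ≤ p - f := by omega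
            exact_mod_cast this
          omega
        have hq3 : c q = c i + ((q - f : ℕ) : ℤ) := hrun q hqf (by omega)
        have : ((q - f : ℕ) : ℤ) = ((p - 1 - f : ℕ) : ℤ) := by omega
        have h9 : (q - f : ℕ) = (p - 1 - f : ℕ) := by exact_mod_cast this
        omega
    have := hmin p (by omega) hple (Or.inr hpd)
    omega
  refine ⟨?_, by omega, ?_⟩
  · intro q hq
    have := hflt q (by omega)
    omega
  · rw [← hfi', hcf]; exact hcf1

/-- **Structure of extractable elements.**  Let `C` be an ordinary Dyck
sequence whose leftmost eligible index is `i`.  Then `C i` is the leftmost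
occurrence of its value in `C`; consequently `i > 0` and `C (i−1) = C i − 1`;
and deleting the entry at index `i` produces an ordinary Dyck sequence. -/
theorem extractable_structure (C : List ℤ) (hC : OrdDyck C) (i : ℕ)
    (hi : Eligible C i) (hmin : ∀ j, Eligible C j → i ≤ j) :
    (∀ p, p < i → C.getD p 0 ≠ C.getD i 0) ∧
    0 < i ∧
    C.getD (i - 1) 0 = C.getD i 0 - 1 ∧
    OrdDyck (C.eraseIdx i) := by
  classical
  obtain ⟨hne, hch, hzero, hnnm⟩ := hC
  obtain ⟨hilt, hcard, hnext⟩ := hi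
  have hstep : ∀ k, k + 1 < C.length → C.getD (k+1) 0 ≤ C.getD k 0 + 1 :=
    fun k hk => affine_step hch hk
  have hnonneg : ∀ k, k < C.length → 0 ≤ C.getD k 0 := by
    intro k hk
    refine hnnm _ ?_
    rw [List.getD_eq_getElem _ _ hk]
    exact List.getElem_mem _
  have hkey := key C.length (fun k => C.getD k 0) hstep hnonneg hzero i hilt
    ((card_filter_one_iff i _).mp hcard)
    (fun j hj h1 h2 => hmin j ⟨hj, (card_filter_one_iff j _).mpr h1, h2⟩)
  have h1 : ∀ p, p < i → C.getD p 0 ≠ C.getD i 0 := hkey.1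
  have h2 : 0 < i := hkey.2.1
  have h3 : C.getD (i - 1) 0 = C.getD i 0 - 1 := hkey.2.2
  have hlen : (C.eraseIdx i).length = C.length - 1 := by
    rw [List.length_eraseIdx]; simp [hilt]
  refine ⟨h1, h2, h3, ?_, ?_, ?_, ?_⟩
  · -- nonempty
    exact List.ne_nil_of_length_pos (by omega)
  · -- affine
    have hglt : ∀ k, k < i → k < C.length - 1 →
        (C.eraseIdx i).getD k 0 = C.getD k 0 := by
      intro k h hk
      have hk' : k < (C.eraseIdx i).length := by omega
      rw [List.getD_eq_getElem _ _ hk', List.getElem_eraseIdx_of_lt hk' h]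
      exact (List.getD_eq_getElem _ _ (by omega)).symm
    have hgee : ∀ k, i ≤ k → k < C.length - 1 →
        (C.eraseIdx i).getD k 0 = C.getD (k+1) 0 := by
      intro k h hk
      have hk' : k < (C.eraseIdx i).length := by omega
      rw [List.getD_eq_getElem _ _ hk', List.getElem_eraseIdx_of_ge hk' h]
      exact (List.getD_eq_getElem _ _ (by omega)).symm
    rw [AffineDyck]; refine List.isChain_iff_getElem.mpr ?_
    intro k hk
    beta_reduce
    rw [← List.getD_eq_getElem _ 0, ← List.getD_eq_getElem _ 0]
    rcases lt_trichotomy (k+1) i with h | h | h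
    · rw [hglt (k+1) h (by omega), hglt k (by omega) (by omega)]
      exact hstep k (by omega)
    · have e1 : (C.eraseIdx i).getD (k+1) 0 = C.getD (i+1) 0 := by
        rw [hgee (k+1) (by omega) (by omega)]
        congr 1
        omega
      rw [e1, hglt k (by omega) (by omega)]
      have e2 : k = i - 1 := by omega
      rw [e2, h3]
      rcases hnext with h' | h'
      · omega
      · omega
    · rw [hgee (k+1) (by omega) (by omega), hgee k (by omega) (by omega)]
      exact hstep (k+1) (by omega)
  · -- starts at 0
    have hk' : 0 < (C.eraseIdx i).length := by omega
    rw [List.getD_eq_getElem _ _ hk', List.getElem_eraseIdx_of_lt hk' h2]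
    have := hzero
    rwa [List.getD_eq_getElem _ _ (show 0 < C.length by omega)] at this
  · -- nonneg
    exact fun a ha => hnnm a (List.mem_of_mem_eraseIdx ha)
end
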